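/- Let S = {ψ_j = ⊗_{i=1}^m φ_{i,j} : j = 1,...,n} be a set of mutually orthogonal product vectors in H = ⊗_{i=1}^m H_i with dim H_i = d_i. If n ≤ Σ_i (d_i − 1), then S is extendible: there exists a nonzero product vector in H orthogonal to every member of S. -/

import Mathlib

open Finset

lemma exists_assign (m n : ℕ) (c : Fin m → ℕ) (h : n ≤ ∑ i, c i) :
    ∃ f : Fin n → Fin m, ∀ i, (univ.filter (fun j => f j = i)).card ≤ c i := by
  rcases Nat.eq_zero_or_pos m with hm | hm
  · have hn : n = 0 := by subst hm; simpa using h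
    subst hn
    exact ⟨Fin.elim0, fun i => by simp⟩
  · set c' : ℕ → ℕ := fun k => if hk : k < m then c ⟨k, hk⟩ else 0 with hc'
    set P : ℕ → ℕ := fun k => ∑ t ∈ range k, c' t with hPdef
    have hPm : n ≤ P m := by
      have h1 : ∑ i, c i = ∑ t ∈ range m, c' t := by
        rw [← Fin.sum_univ_eq_sum_range]
        exact Finset.sum_congr rfl (fun i _ => by simp [hc', i.isLt])
      have h2 : P m = ∑ t ∈ range m, c' t := rfl
      omega
    have hex : ∀ j : Fin n, ∃ k, (j : ℕ) < P (k + 1) := by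
      intro j
      refine ⟨m - 1, ?_⟩
      have hmm : m - 1 + 1 = m := by omega
      rw [hmm]
      exact lt_of_lt_of_le j.isLt hPm
    have hfind : ∀ j : Fin n, Nat.find (hex j) < m := fun j =>
      lt_of_le_of_lt (Nat.find_le (by
        have hmm : m - 1 + 1 = m := by omega
        rw [hmm]; exact lt_of_lt_of_le j.isLt hPm))
        (Nat.sub_lt hm one_pos)
    set f : Fin n → Fin m := fun j => ⟨Nat.find (hex j), hfind j⟩ with hf
    refine ⟨f, fun i => ?_⟩
    have key : ∀ j : Fin n, f j = i → P i ≤ (j : ℕ) ∧ (j : ℕ) < P i + c i := by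
      intro j hji
      have hval : Nat.find (hex j) = (i : ℕ) := by
        have := congrArg Fin.val hji; simpa [hf] using this
      constructor
      · rcases Nat.eq_zero_or_pos (i : ℕ) with h0 | h0
        · simp [hPdef, h0]
        · have := Nat.find_min (hex j) (m := (i : ℕ) - 1) (by omega)
          push_neg at this
          rwa [Nat.sub_add_cancel h0] at this
      · have hlt := Nat.find_spec (hex j)
        rw [hval] at hlt
        have : P ((i : ℕ) + 1) = P i + c i := by
          simp [hPdef, Finset.sum_range_succ, hc', i.isLt]
        omega
    calc (univ.filter (fun j => f j = i)).card
        ≤ (Finset.Ico (P i) (P i + c i)).card := by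
          refine Finset.card_le_card_of_injOn (fun j => (j : ℕ)) ?_ ?_
          · intro j hj
            simp only [Finset.mem_coe, mem_filter] at hj
            rcases key j hj.2 with ⟨h1, h2⟩
            simp [Finset.mem_Ico, h1, h2]
          · intro a _ b _ hab
            exact Fin.val_injective hab
      _ = c i := by simp

theorem stmt4 (m n : ℕ) (d : Fin m → ℕ) (hd : ∀ i, 0 < d i)
    (φ : (i : Fin m) → Fin n → EuclideanSpace ℂ (Fin (d i)))
    (hne : ∀ i j, φ i j ≠ 0)
    (horth : ∀ j k : Fin n, j ≠ k → ∃ i, (inner ℂ (φ i j) (φ i k) : ℂ) = 0)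
    (hcount : n ≤ ∑ i, (d i - 1)) :
    ∃ χ : (i : Fin m) → EuclideanSpace ℂ (Fin (d i)),
      (∀ i, χ i ≠ 0) ∧ ∀ j, ∃ i, (inner ℂ (χ i) (φ i j) : ℂ) = 0 := by
  classical
  obtain ⟨f, hf⟩ := exists_assign m n (fun i => d i - 1) hcount
  have hchoose : ∀ i : Fin m, ∃ χ : EuclideanSpace ℂ (Fin (d i)),
      χ ≠ 0 ∧ ∀ j, f j = i → (inner ℂ χ (φ i j) : ℂ) = 0 := by
    intro i
    set s : Finset (EuclideanSpace ℂ (Fin (d i))) :=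
      ((univ.filter (fun j => f j = i)).image (φ i)) with hs
    set K : Submodule ℂ (EuclideanSpace ℂ (Fin (d i))) := Submodule.span ℂ (s : Set _) with hK
    have hrank : Module.finrank ℂ K < d i := by
      have h1 : Module.finrank ℂ K ≤ s.card := finrank_span_finset_le_card s
      have h2 : s.card ≤ d i - 1 := le_trans (Finset.card_image_le) (hf i)
      have := hd i
      omega
    have hKne : K ≠ ⊤ := by
      intro hKtop
      rw [hKtop] at hrank
      have heq : Module.finrank ℂ (EuclideanSpace ℂ (Fin (d i))) = d i := by
        simp [finrank_euclideanSpace]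
      rw [finrank_top, heq] at hrank
      omega
    have hbot : Kᗮ ≠ ⊥ := fun hb => hKne (Submodule.orthogonal_eq_bot_iff.mp hb)
    obtain ⟨χ, hχmem, hχne⟩ := Submodule.exists_mem_ne_zero_of_ne_bot hbot
    refine ⟨χ, hχne, fun j hj => ?_⟩
    have hmem : φ i j ∈ K := Submodule.subset_span (by
      simp [hs]; exact ⟨j, hj, rfl⟩)
    exact (Submodule.mem_orthogonal' K χ).mp hχmem _ hmem
  choose χ hχ1 hχ2 using hchoose
  exact ⟨χ, hχ1, fun j => ⟨f j, hχ2 (f j) j rfl⟩⟩
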